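/- Let 0 < ε ≤ 1/4. There exists a constant c > 0 such that for every a > 0 and every T with 0 < T ≤ 1/2 satisfying 2a² < T, ∫₀^T (T - s)^{-1/2} (a² + T - s)^{-1/2} s^{-1/4} (-ln s)^{-1/4-ε} ds ≤ c T^{-1/4} (-ln T)^{-1/4-ε} (1 + ln(T/(2a²))). -/

import Mathlib

open MeasureTheory Real Set

set_option maxHeartbeats 1600000 in
theorem stmt_18 (ε : ℝ) (hε : 0 < ε) (hε' : ε ≤ 1/4) :
    ∃ c : ℝ, 0 < c ∧ ∀ a : ℝ, 0 < a → ∀ T : ℝ, 0 < T → T ≤ 1/2 → 2*a^2 < T →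
      (∫ s in Ioo (0:ℝ) T,
          (T - s) ^ (-(1/2) : ℝ) * (a^2 + T - s) ^ (-(1/2) : ℝ) *
            s ^ (-(1/4) : ℝ) * (-Real.log s) ^ (-(1/4) - ε)) ≤
        c * T ^ (-(1/4) : ℝ) * (-Real.log T) ^ (-(1/4) - ε) * (1 + Real.log (T/(2*a^2))) := by
  refine ⟨7, by norm_num, ?_⟩
  intro a ha T hT hT2 haT
  have hT1 : T < 1 := by linarith
  have hlT : 0 < -Real.log T := by
    have := Real.log_neg hT hT1
    linarith
  have ha2 : (0:ℝ) < a ^ 2 := by positivity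
  have ha2T : a ^ 2 < T / 2 := by linarith
  have h2T : (0:ℝ) < T / 2 := by linarith
  set p : ℝ := -(1/4) - ε with hpdef
  have hp : p < 0 := by rw [hpdef]; linarith
  set f : ℝ → ℝ := fun s => (T - s) ^ (-(1/2) : ℝ) * (a^2 + T - s) ^ (-(1/2) : ℝ) *
      s ^ (-(1/4) : ℝ) * (-Real.log s) ^ p with hfdef
  set L := Real.log (T / (2 * a ^ 2)) with hLdef
  have hL : 0 < L := by
    rw [hLdef]
    apply Real.log_pos
    rw [lt_div_iff₀ (by positivity)]
    linarith
  have hlogmono : ∀ s : ℝ, 0 < s → s ≤ T → (-Real.log T) ≤ -Real.log s := by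
    intro s hs hsT
    have := Real.log_le_log hs hsT
    linarith
  have hlognn : ∀ s : ℝ, 0 ≤ s → s ≤ T → (0:ℝ) ≤ -Real.log s := by
    intro s hs hsT
    have := Real.log_nonpos hs (by linarith)
    linarith
  have hfm : Measurable f := by
    apply Measurable.mul
    apply Measurable.mul
    apply Measurable.mul
    · exact (measurable_const.sub measurable_id).pow measurable_const
    · exact (measurable_const.sub measurable_id).pow measurable_const
    · exact measurable_id.pow measurable_const
    · exact Real.measurable_log.neg.pow measurable_const
  have hfnn : ∀ s : ℝ, 0 ≤ s → s ≤ T → 0 ≤ f s := by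
    intro s hs hsT
    have h1 : (0:ℝ) ≤ T - s := by linarith
    have h2 : (0:ℝ) ≤ a^2 + T - s := by linarith
    have h4 := hlognn s hs hsT
    exact mul_nonneg (mul_nonneg (mul_nonneg (Real.rpow_nonneg h1 _)
      (Real.rpow_nonneg h2 _)) (Real.rpow_nonneg hs _)) (Real.rpow_nonneg h4 _)
  set K2 : ℝ := (T/2) ^ (-(1/4):ℝ) * (-Real.log T) ^ p with hK2def
  have hK2 : 0 < K2 := mul_pos (Real.rpow_pos_of_pos h2T _) (Real.rpow_pos_of_pos hlT _)
  -- ### Piece 1 : on [0, T/2]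
  have hg1i : IntervalIntegrable
      (fun s : ℝ => ((T/2) ^ (-(1/2):ℝ) * (T/2) ^ (-(1/2):ℝ) * (-Real.log T) ^ p) * s ^ (-(1/4):ℝ))
      volume 0 (T/2) :=
    (intervalIntegral.intervalIntegrable_rpow' (by norm_num)).const_mul _
  have hpt1 : ∀ s ∈ Icc (0:ℝ) (T/2), f s ≤
      ((T/2) ^ (-(1/2):ℝ) * (T/2) ^ (-(1/2):ℝ) * (-Real.log T) ^ p) * s ^ (-(1/4):ℝ) := by
    intro s hs
    rcases eq_or_lt_of_le hs.1 with h0 | h0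
    · rw [hfdef]
      simp [← h0, Real.zero_rpow (show (-(1/4):ℝ) ≠ 0 by norm_num)]
    · have hsT2 : s ≤ T/2 := hs.2
      have h2nn : (0:ℝ) ≤ (T/2) ^ (-(1/2):ℝ) := Real.rpow_nonneg h2T.le _
      have hBnn : (0:ℝ) ≤ (a^2 + T - s) ^ (-(1/2):ℝ) := Real.rpow_nonneg (by linarith) _
      have hCnn : (0:ℝ) ≤ s ^ (-(1/4):ℝ) := Real.rpow_nonneg h0.le _
      have hDnn : (0:ℝ) ≤ (-Real.log s) ^ p := Real.rpow_nonneg (hlognn s h0.le (by linarith)) _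
      have hA : (T - s) ^ (-(1/2):ℝ) ≤ (T/2) ^ (-(1/2):ℝ) :=
        Real.rpow_le_rpow_of_nonpos h2T (by linarith) (by norm_num)
      have hB : (a^2 + T - s) ^ (-(1/2):ℝ) ≤ (T/2) ^ (-(1/2):ℝ) :=
        Real.rpow_le_rpow_of_nonpos h2T (by linarith) (by norm_num)
      have hD : (-Real.log s) ^ p ≤ (-Real.log T) ^ p :=
        Real.rpow_le_rpow_of_nonpos hlT (hlogmono s h0 (by linarith)) hp.le
      calc f s = (T - s) ^ (-(1/2):ℝ) * (a^2 + T - s) ^ (-(1/2):ℝ) *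
            s ^ (-(1/4):ℝ) * (-Real.log s) ^ p := by rw [hfdef]
        _ ≤ (T/2) ^ (-(1/2):ℝ) * (T/2) ^ (-(1/2):ℝ) * s ^ (-(1/4):ℝ) * (-Real.log T) ^ p := by
            apply mul_le_mul _ hD hDnn (mul_nonneg (mul_nonneg h2nn h2nn) hCnn)
            apply mul_le_mul _ le_rfl hCnn (mul_nonneg h2nn h2nn)
            exact mul_le_mul hA hB hBnn h2nn
        _ = ((T/2) ^ (-(1/2):ℝ) * (T/2) ^ (-(1/2):ℝ) * (-Real.log T) ^ p) * s ^ (-(1/4):ℝ) := by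
            ring
  have h1 : IntervalIntegrable f volume 0 (T/2) := by
    apply IntervalIntegrable.mono_fun' hg1i hfm.aestronglyMeasurable
    filter_upwards [ae_restrict_mem measurableSet_uIoc] with s hs
    rw [Set.uIoc_of_le h2T.le] at hs
    rw [Real.norm_eq_abs, abs_of_nonneg (hfnn s hs.1.le (by linarith [hs.2]))]
    exact hpt1 s ⟨hs.1.le, hs.2⟩
  have hB1 : ∫ s in (0:ℝ)..(T/2), f s ≤ (8/3) * (T ^ (-(1/4):ℝ) * (-Real.log T) ^ p) := by
    have hmono := intervalIntegral.integral_mono_on h2T.le h1 hg1i hpt1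
    rw [intervalIntegral.integral_const_mul,
      integral_rpow (Or.inl (by norm_num : (-1:ℝ) < -(1/4)))] at hmono
    have hz : (0:ℝ) ^ (-(1/4)+1 : ℝ) = 0 := Real.zero_rpow (by norm_num)
    rw [hz] at hmono
    refine le_trans hmono ?_
    have e1 : (T/2) ^ (-(1/2):ℝ) * (T/2) ^ (-(1/2):ℝ) = (T/2) ^ (-(1):ℝ) := by
      rw [← Real.rpow_add h2T]; norm_num
    have e2 : (T/2) ^ (-(1/4)+1:ℝ) ≤ T ^ (-(1/4)+1:ℝ) :=
      Real.rpow_le_rpow h2T.le (by linarith) (by norm_num)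
    have e3 : T ^ (-(1):ℝ) * T ^ (-(1/4)+1:ℝ) = T ^ (-(1/4):ℝ) := by
      rw [← Real.rpow_add hT]; norm_num
    have e4 : (T/2) ^ (-(1):ℝ) = 2 * T ^ (-(1):ℝ) := by
      rw [Real.rpow_neg_one, Real.rpow_neg_one]
      field_simp
    calc (T/2) ^ (-(1/2):ℝ) * (T/2) ^ (-(1/2):ℝ) * (-Real.log T) ^ p *
          (((T/2) ^ (-(1/4)+1:ℝ) - 0) / (-(1/4)+1))
        = (4/3) * ((T/2) ^ (-(1):ℝ) * (T/2) ^ (-(1/4)+1:ℝ)) * (-Real.log T) ^ p := by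
          rw [e1]; ring
      _ ≤ (4/3) * ((T/2) ^ (-(1):ℝ) * T ^ (-(1/4)+1:ℝ)) * (-Real.log T) ^ p := by
          apply mul_le_mul_of_nonneg_right _ (Real.rpow_nonneg hlT.le _)
          apply mul_le_mul_of_nonneg_left _ (by norm_num : (0:ℝ) ≤ 4/3)
          exact mul_le_mul_of_nonneg_left e2 (Real.rpow_nonneg h2T.le _)
      _ = (8/3) * (T ^ (-(1):ℝ) * T ^ (-(1/4)+1:ℝ)) * (-Real.log T) ^ p := by
          rw [e4]; ring
      _ = (8/3) * (T ^ (-(1/4):ℝ) * (-Real.log T) ^ p) := by rw [e3]; ring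
  -- ### Piece 2 : on [T/2, T - a²]
  have hTa : T/2 ≤ T - a^2 := by linarith
  have hfc2 : IntervalIntegrable f volume (T/2) (T - a^2) := by
    apply ContinuousOn.intervalIntegrable
    rw [uIcc_of_le hTa, hfdef]
    have hsub : Icc (T/2) (T - a^2) ⊆ {(0:ℝ)}ᶜ := by
      intro x hx
      simp only [mem_compl_iff, mem_singleton_iff]
      have := hx.1; intro h; rw [h] at this; linarith
    apply ContinuousOn.mul
    apply ContinuousOn.mul
    apply ContinuousOn.mul
    · apply ContinuousOn.rpow_const (continuous_const.sub continuous_id).continuousOn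
      intro x hx
      left
      have h := hx.2
      have : 0 < T - x := by linarith
      simpa using this.ne'
    · apply ContinuousOn.rpow_const (continuous_const.sub continuous_id).continuousOn
      intro x hx
      left
      have h := hx.2
      have : 0 < a^2 + T - x := by linarith
      simpa using this.ne'
    · apply ContinuousOn.rpow_const continuous_id.continuousOn
      intro x hx
      left
      have h := hx.1
      have : 0 < x := by linarith
      simpa using this.ne'
    · apply ContinuousOn.rpow_const (Real.continuousOn_log.mono hsub).neg
      intro x hx
      left
      have hx0 : 0 < x := by have := hx.1; linarith
      have hx1 : x < 1 := by have := hx.2; linarith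
      have := Real.log_neg hx0 hx1
      rw [Pi.neg_apply]
      linarith
  have hg2i : IntervalIntegrable (fun s : ℝ => K2 * (T - s)⁻¹) volume (T/2) (T - a^2) := by
    apply ContinuousOn.intervalIntegrable
    apply ContinuousOn.mul continuousOn_const
    apply ContinuousOn.inv₀ (continuous_const.sub continuous_id).continuousOn
    intro x hx
    rw [uIcc_of_le hTa] at hx
    have h := hx.2
    have : 0 < T - x := by linarith
    simpa using this.ne'
  have hpt2 : ∀ s ∈ Icc (T/2) (T - a^2), f s ≤ K2 * (T - s)⁻¹ := by
    intro s hs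
    have hs0 : 0 < s := lt_of_lt_of_le h2T hs.1
    have hTs : 0 < T - s := by have := hs.2; linarith
    have hAnn : (0:ℝ) ≤ (T - s) ^ (-(1/2):ℝ) := Real.rpow_nonneg hTs.le _
    have hA : (a^2 + T - s) ^ (-(1/2):ℝ) ≤ (T - s) ^ (-(1/2):ℝ) :=
      Real.rpow_le_rpow_of_nonpos hTs (by linarith) (by norm_num)
    have hC : s ^ (-(1/4):ℝ) ≤ (T/2) ^ (-(1/4):ℝ) :=
      Real.rpow_le_rpow_of_nonpos h2T hs.1 (by norm_num)
    have hD : (-Real.log s) ^ p ≤ (-Real.log T) ^ p :=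
      Real.rpow_le_rpow_of_nonpos hlT (hlogmono s hs0 (by linarith)) hp.le
    have hCnn : (0:ℝ) ≤ s ^ (-(1/4):ℝ) := Real.rpow_nonneg hs0.le _
    have hDnn : (0:ℝ) ≤ (-Real.log s) ^ p :=
      Real.rpow_nonneg (hlognn s hs0.le (by linarith)) _
    have e : (T - s) ^ (-(1/2):ℝ) * (T - s) ^ (-(1/2):ℝ) = (T - s)⁻¹ := by
      rw [← Real.rpow_add hTs]
      norm_num [Real.rpow_neg_one]
    calc f s = (T - s) ^ (-(1/2):ℝ) * (a^2 + T - s) ^ (-(1/2):ℝ) *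
          s ^ (-(1/4):ℝ) * (-Real.log s) ^ p := by rw [hfdef]
      _ ≤ (T - s) ^ (-(1/2):ℝ) * (T - s) ^ (-(1/2):ℝ) *
          (T/2) ^ (-(1/4):ℝ) * (-Real.log T) ^ p := by
          apply mul_le_mul _ hD hDnn
            (mul_nonneg (mul_nonneg hAnn hAnn) (Real.rpow_nonneg h2T.le _))
          apply mul_le_mul _ hC hCnn (mul_nonneg hAnn hAnn)
          exact mul_le_mul_of_nonneg_left hA hAnn
      _ = ((T - s) ^ (-(1/2):ℝ) * (T - s) ^ (-(1/2):ℝ)) *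
          ((T/2) ^ (-(1/4):ℝ) * (-Real.log T) ^ p) := by ring
      _ = K2 * (T - s)⁻¹ := by rw [e, hK2def]; ring
  have hB2 : ∫ s in (T/2)..(T - a^2), f s ≤ K2 * L := by
    have hmono := intervalIntegral.integral_mono_on hTa hfc2 hg2i hpt2
    rw [intervalIntegral.integral_const_mul] at hmono
    have hcomp : (∫ s in (T/2)..(T - a^2), (T - s)⁻¹) = ∫ x in (a^2:ℝ)..(T/2), x⁻¹ := by
      have h := intervalIntegral.integral_comp_sub_left (a := T/2) (b := T - a^2)
        (fun x : ℝ => x⁻¹) T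
      simpa [sub_sub_cancel, sub_half] using h
    rw [hcomp, integral_inv_of_pos ha2 h2T, div_div, ← hLdef] at hmono
    exact hmono
  -- ### Piece 3 : on [T - a², T]
  have hTaT : T - a^2 ≤ T := by linarith
  have hg3base : IntervalIntegrable (fun s : ℝ => (T - s) ^ (-(1/2):ℝ)) volume (T - a^2) T := by
    have h := (intervalIntegral.intervalIntegrable_rpow' (r := -(1/2)) (by norm_num)
      (a := 0) (b := a^2)).comp_sub_left T
    simpa using h.symm
  have hg3i : IntervalIntegrable
      (fun s : ℝ => ((a^2) ^ (-(1/2):ℝ) * K2) * (T - s) ^ (-(1/2):ℝ)) volume (T - a^2) T :=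
    hg3base.const_mul _
  have hpt3 : ∀ s ∈ Icc (T - a^2) T, f s ≤ ((a^2) ^ (-(1/2):ℝ) * K2) * (T - s) ^ (-(1/2):ℝ) := by
    intro s hs
    rcases eq_or_lt_of_le hs.2 with hsT | hsT
    · rw [hfdef, hsT]
      simp [Real.zero_rpow (show (-(1/2):ℝ) ≠ 0 by norm_num)]
    · have hs0 : 0 < s := by have := hs.1; linarith
      have hTs : 0 < T - s := by linarith
      have hAnn : (0:ℝ) ≤ (T - s) ^ (-(1/2):ℝ) := Real.rpow_nonneg hTs.le _
      have hB : (a^2 + T - s) ^ (-(1/2):ℝ) ≤ (a^2) ^ (-(1/2):ℝ) :=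
        Real.rpow_le_rpow_of_nonpos ha2 (by linarith) (by norm_num)
      have hBnn : (0:ℝ) ≤ (a^2 + T - s) ^ (-(1/2):ℝ) := Real.rpow_nonneg (by linarith) _
      have hC : s ^ (-(1/4):ℝ) ≤ (T/2) ^ (-(1/4):ℝ) :=
        Real.rpow_le_rpow_of_nonpos h2T (by linarith [hs.1]) (by norm_num)
      have hCnn : (0:ℝ) ≤ s ^ (-(1/4):ℝ) := Real.rpow_nonneg hs0.le _
      have hD : (-Real.log s) ^ p ≤ (-Real.log T) ^ p :=
        Real.rpow_le_rpow_of_nonpos hlT (hlogmono s hs0 hs.2) hp.le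
      have hDnn : (0:ℝ) ≤ (-Real.log s) ^ p := Real.rpow_nonneg (hlognn s hs0.le hs.2) _
      have ha2nn : (0:ℝ) ≤ (a^2) ^ (-(1/2):ℝ) := Real.rpow_nonneg ha2.le _
      calc f s = (T - s) ^ (-(1/2):ℝ) * (a^2 + T - s) ^ (-(1/2):ℝ) *
            s ^ (-(1/4):ℝ) * (-Real.log s) ^ p := by rw [hfdef]
        _ ≤ (T - s) ^ (-(1/2):ℝ) * (a^2) ^ (-(1/2):ℝ) *
            (T/2) ^ (-(1/4):ℝ) * (-Real.log T) ^ p := by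
            apply mul_le_mul _ hD hDnn
              (mul_nonneg (mul_nonneg hAnn ha2nn) (Real.rpow_nonneg h2T.le _))
            apply mul_le_mul _ hC hCnn (mul_nonneg hAnn ha2nn)
            exact mul_le_mul_of_nonneg_left hB hAnn
        _ = ((a^2) ^ (-(1/2):ℝ) * K2) * (T - s) ^ (-(1/2):ℝ) := by rw [hK2def]; ring
  have h3 : IntervalIntegrable f volume (T - a^2) T := by
    apply IntervalIntegrable.mono_fun' hg3i hfm.aestronglyMeasurable
    filter_upwards [ae_restrict_mem measurableSet_uIoc] with s hs
    rw [Set.uIoc_of_le hTaT] at hs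
    have hs0 : 0 ≤ s := by have := hs.1; nlinarith [ha2T, h2T]
    rw [Real.norm_eq_abs, abs_of_nonneg (hfnn s hs0 hs.2)]
    exact hpt3 s ⟨hs.1.le, hs.2⟩
  have hB3 : ∫ s in (T - a^2)..T, f s ≤ 2 * K2 := by
    have hmono := intervalIntegral.integral_mono_on hTaT h3 hg3i hpt3
    rw [intervalIntegral.integral_const_mul] at hmono
    have hcomp : (∫ s in (T - a^2)..T, (T - s) ^ (-(1/2):ℝ))
        = ∫ x in (0:ℝ)..(a^2), x ^ (-(1/2):ℝ) := by
      have h := intervalIntegral.integral_comp_sub_left (a := T - a^2) (b := T)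
        (fun x : ℝ => x ^ (-(1/2):ℝ)) T
      simpa [sub_sub_cancel] using h
    rw [hcomp, integral_rpow (Or.inl (by norm_num : (-1:ℝ) < -(1/2)))] at hmono
    have hz : (0:ℝ) ^ (-(1/2)+1 : ℝ) = 0 := Real.zero_rpow (by norm_num)
    rw [hz] at hmono
    refine le_trans hmono (le_of_eq ?_)
    have e : (a^2:ℝ) ^ (-(1/2):ℝ) * (a^2) ^ (-(1/2)+1:ℝ) = 1 := by
      rw [← Real.rpow_add ha2]
      norm_num
    calc (a^2) ^ (-(1/2):ℝ) * K2 * (((a^2) ^ (-(1/2)+1:ℝ) - 0) / (-(1/2)+1))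
        = ((a^2) ^ (-(1/2):ℝ) * (a^2) ^ (-(1/2)+1:ℝ)) * K2 * 2 := by ring
      _ = 2 * K2 := by rw [e]; ring
  -- ### K2 ≤ 2 C0
  have hK2le : K2 ≤ 2 * (T ^ (-(1/4):ℝ) * (-Real.log T) ^ p) := by
    have e5 : (T/2:ℝ) ^ (-(1/4):ℝ) = T ^ (-(1/4):ℝ) * (2:ℝ) ^ ((1/4):ℝ) := by
      rw [div_eq_mul_inv, Real.mul_rpow hT.le (by norm_num),
        Real.inv_rpow (by norm_num : (0:ℝ) ≤ 2), ← Real.rpow_neg (by norm_num : (0:ℝ) ≤ 2)]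
      norm_num
    have e6 : (2:ℝ) ^ ((1/4):ℝ) ≤ 2 := by
      calc (2:ℝ) ^ ((1/4):ℝ) ≤ (2:ℝ) ^ (1:ℝ) :=
            Real.rpow_le_rpow_of_exponent_le one_le_two (by norm_num)
        _ = 2 := Real.rpow_one 2
    have h7 : (0:ℝ) ≤ T ^ (-(1/4):ℝ) * (-Real.log T) ^ p :=
      mul_nonneg (Real.rpow_nonneg hT.le _) (Real.rpow_nonneg hlT.le _)
    calc K2 = T ^ (-(1/4):ℝ) * (2:ℝ) ^ ((1/4):ℝ) * (-Real.log T) ^ p := by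
          rw [hK2def, e5]
      _ = (2:ℝ) ^ ((1/4):ℝ) * (T ^ (-(1/4):ℝ) * (-Real.log T) ^ p) := by ring
      _ ≤ 2 * (T ^ (-(1/4):ℝ) * (-Real.log T) ^ p) := mul_le_mul_of_nonneg_right e6 h7
  -- ### assemble
  have h0 : (∫ s in Ioo (0:ℝ) T, f s) = ∫ s in (0:ℝ)..T, f s := by
    rw [intervalIntegral.integral_of_le hT.le, integral_Ioc_eq_integral_Ioo]
  have hsplitB : ∫ s in (T/2)..T, f s
      = (∫ s in (T/2)..(T - a^2), f s) + ∫ s in (T - a^2)..T, f s :=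
    (intervalIntegral.integral_add_adjacent_intervals hfc2 h3).symm
  have hsplitA : ∫ s in (0:ℝ)..T, f s
      = (∫ s in (0:ℝ)..(T/2), f s) + ∫ s in (T/2)..T, f s :=
    (intervalIntegral.integral_add_adjacent_intervals h1 (hfc2.trans h3)).symm
  rw [h0, hsplitA, hsplitB]
  have hC0 : (0:ℝ) ≤ T ^ (-(1/4):ℝ) * (-Real.log T) ^ p :=
    mul_nonneg (Real.rpow_nonneg hT.le _) (Real.rpow_nonneg hlT.le _)
  nlinarith [hB1, hB2, hB3, mul_le_mul_of_nonneg_right hK2le hL.le,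
    mul_nonneg hC0 hL.le, hK2.le, hL.le, hC0]
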